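/- Sharp threshold for synchronization: let K be the Lipschitz constant of the non-decreasing signal function s : [-1,1] → [-1,1], and let λ_{N-1} be the second-largest eigenvalue of D⁻¹A for a connected simple graph. If K·λ_{N-1} < 1, then every equilibrium x* of ẋ = D⁻¹A s(x) − x is fully synchronized: x* = c·𝟏 for some c with s(c) = c. -/

import Mathlib

lemma exists_eigen {N : ℕ} (S : Matrix (Fin N) (Fin N) ℝ) (hsym : ∀ i j, S i j = S j i) :
    ∃ (e : Fin N → Fin N → ℝ) (μ : Fin N → ℝ),
      (∀ k, ∑ i, e k i * e k i = 1) ∧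
      (∀ k i, ∑ j, S i j * e k j = μ k * e k i) ∧
      (∀ p : Fin N → ℝ, ∀ i, (∑ k, (∑ j, e k j * p j) * e k i) = p i) := by
  have hherm : S.IsHermitian := by
    ext i j
    simpa [Matrix.conjTranspose_apply] using hsym j i
  have hT : (Matrix.toEuclideanLin S).IsSymmetric :=
    (Matrix.isHermitian_iff_isSymmetric).mp hherm
  have hn : Module.finrank ℝ (EuclideanSpace ℝ (Fin N)) = N := finrank_euclideanSpace_fin
  set b := hT.eigenvectorBasis hn with hb
  refine ⟨fun k i => b k i, fun k => hT.eigenvalues hn k, ?_, ?_, ?_⟩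
  · intro k
    have h1 : ‖b k‖ = 1 := b.orthonormal.1 k
    have h2 : (inner ℝ (b k) (b k) : ℝ) = ∑ i, b k i * b k i := by
      rw [PiLp.inner_apply]; simp only [RCLike.inner_apply, conj_trivial]
    have h3 : (inner ℝ (b k) (b k) : ℝ) = ‖b k‖ ^ 2 := real_inner_self_eq_norm_sq _
    rw [← h2, h3, h1]; norm_num
  · intro k i
    have h := hT.apply_eigenvectorBasis hn k
    have h2 : (Matrix.toEuclideanLin S (b k)) i = S.mulVec (b k) i := rfl
    have h3 : (Matrix.toEuclideanLin S (b k)) i = (hT.eigenvalues hn k) • (b k) i := by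
      rw [h]; rfl
    rw [Matrix.mulVec, dotProduct] at h2
    rw [h3] at h2
    simpa [mul_comm] using h2.symm
  · intro p i
    set q : EuclideanSpace ℝ (Fin N) := (WithLp.equiv 2 (Fin N → ℝ)).symm p with hq
    have h := b.sum_repr q
    have h2 : ∀ k, b.repr q k = ∑ j, b k j * p j := by
      intro k
      rw [b.repr_apply_apply, PiLp.inner_apply]
      refine Finset.sum_congr rfl fun j _ => ?_
      simp only [RCLike.inner_apply, conj_trivial]
      show _ = (b k).ofLp j * q.ofLp j
      ring
    have h3 : (∑ k, b.repr q k • b k) i = q i := by rw [h]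
    rw [WithLp.ofLp_sum, Finset.sum_apply] at h3
    calc ∑ k, (∑ j, b k j * p j) * b k i = ∑ k, (b.repr q k • b k) i := by
          refine Finset.sum_congr rfl fun k _ => ?_
          rw [h2 k]; rfl
      _ = p i := h3

lemma repr_apply {N : ℕ} (S : Matrix (Fin N) (Fin N) ℝ) (e : Fin N → Fin N → ℝ) (μ : Fin N → ℝ)
    (heig : ∀ k i, ∑ j, S i j * e k j = μ k * e k i)
    (hcomp : ∀ p : Fin N → ℝ, ∀ i, (∑ k, (∑ j, e k j * p j) * e k i) = p i)
    (p : Fin N → ℝ) (i : Fin N) :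
    ∑ j, S i j * p j = ∑ k, μ k * (∑ j, e k j * p j) * e k i := by
  calc ∑ j, S i j * p j
      = ∑ j, S i j * (∑ k, (∑ j', e k j' * p j') * e k j) := by
        refine Finset.sum_congr rfl fun j _ => ?_; rw [hcomp p j]
    _ = ∑ j, ∑ k, (∑ j', e k j' * p j') * (S i j * e k j) := by
        refine Finset.sum_congr rfl fun j _ => ?_; rw [Finset.mul_sum]
        refine Finset.sum_congr rfl fun k _ => ?_; ring
    _ = ∑ k, ∑ j, (∑ j', e k j' * p j') * (S i j * e k j) := Finset.sum_comm
    _ = ∑ k, μ k * (∑ j', e k j' * p j') * e k i := by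
        refine Finset.sum_congr rfl fun k _ => ?_
        rw [← Finset.mul_sum, heig k i]; ring

lemma repr_norm {N : ℕ} (e : Fin N → Fin N → ℝ)
    (hcomp : ∀ p : Fin N → ℝ, ∀ i, (∑ k, (∑ j, e k j * p j) * e k i) = p i)
    (p : Fin N → ℝ) :
    ∑ i, p i * p i = ∑ k, (∑ j, e k j * p j) * (∑ j, e k j * p j) := by
  calc ∑ i, p i * p i
      = ∑ i, p i * (∑ k, (∑ j, e k j * p j) * e k i) := by
        refine Finset.sum_congr rfl fun i _ => ?_; rw [hcomp p i]
    _ = ∑ i, ∑ k, (∑ j, e k j * p j) * (e k i * p i) := by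
        refine Finset.sum_congr rfl fun i _ => ?_; rw [Finset.mul_sum]
        refine Finset.sum_congr rfl fun k _ => ?_; ring
    _ = ∑ k, ∑ i, (∑ j, e k j * p j) * (e k i * p i) := Finset.sum_comm
    _ = ∑ k, (∑ j, e k j * p j) * (∑ j, e k j * p j) := by
        refine Finset.sum_congr rfl fun k _ => ?_
        rw [← Finset.mul_sum]

lemma repr_quad {N : ℕ} (S : Matrix (Fin N) (Fin N) ℝ) (e : Fin N → Fin N → ℝ) (μ : Fin N → ℝ)
    (heig : ∀ k i, ∑ j, S i j * e k j = μ k * e k i)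
    (hcomp : ∀ p : Fin N → ℝ, ∀ i, (∑ k, (∑ j, e k j * p j) * e k i) = p i)
    (p : Fin N → ℝ) :
    ∑ i, p i * (∑ j, S i j * p j)
      = ∑ k, μ k * ((∑ j, e k j * p j) * (∑ j, e k j * p j)) := by
  calc ∑ i, p i * (∑ j, S i j * p j)
      = ∑ i, p i * (∑ k, μ k * (∑ j, e k j * p j) * e k i) := by
        refine Finset.sum_congr rfl fun i _ => ?_
        rw [repr_apply S e μ heig hcomp p i]
    _ = ∑ i, ∑ k, μ k * (∑ j, e k j * p j) * (e k i * p i) := by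
        refine Finset.sum_congr rfl fun i _ => ?_; rw [Finset.mul_sum]
        refine Finset.sum_congr rfl fun k _ => ?_; ring
    _ = ∑ k, ∑ i, μ k * (∑ j, e k j * p j) * (e k i * p i) := Finset.sum_comm
    _ = ∑ k, μ k * ((∑ j, e k j * p j) * (∑ j, e k j * p j)) := by
        refine Finset.sum_congr rfl fun k _ => ?_
        rw [← Finset.mul_sum]; ring

lemma maxp {N : ℕ} (G : SimpleGraph (Fin N)) [DecidableRel G.Adj] (hconn : G.Connected)
    (a : Fin N → Fin N → ℝ) (haG : ∀ i j, a i j = if G.Adj i j then 1 else 0)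
    (d : Fin N → ℝ) (hd : ∀ i, d i = ∑ j, a i j)
    (z : Fin N → ℝ) (hz : ∀ i, d i * z i = ∑ j, a i j * z j) : ∀ i j, z i = z j := by
  haveI : Nonempty (Fin N) := hconn.nonempty
  have ha_nonneg : ∀ i j, 0 ≤ a i j := by
    intro i j; rw [haG]; split <;> norm_num
  obtain ⟨i₀, -, hmax⟩ := Finset.exists_max_image Finset.univ z ⟨Classical.arbitrary _, Finset.mem_univ _⟩
  have step : ∀ i, z i = z i₀ → ∀ j, G.Adj i j → z j = z i₀ := by
    intro i hi j hij
    have hsum : ∑ j', a i j' * (z i₀ - z j') = 0 := by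
      have : ∑ j', a i j' * (z i₀ - z j') = (∑ j', a i j') * z i₀ - ∑ j', a i j' * z j' := by
        rw [Finset.sum_mul, ← Finset.sum_sub_distrib]
        refine Finset.sum_congr rfl fun j' _ => ?_; ring
      rw [this, ← hd i, ← hz i, hi]; ring
    have hterm : ∀ j' ∈ Finset.univ, (0:ℝ) ≤ a i j' * (z i₀ - z j') := by
      intro j' _
      exact mul_nonneg (ha_nonneg i j') (by linarith [hmax j' (Finset.mem_univ j')])
    have := (Finset.sum_eq_zero_iff_of_nonneg hterm).mp hsum j (Finset.mem_univ j)
    have haij : a i j = 1 := by rw [haG]; simp [hij]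
    rw [haij, one_mul, sub_eq_zero] at this
    exact this.symm
  have walk : ∀ i j : Fin N, ∀ _w : G.Walk i j, z i = z i₀ → z j = z i₀ := by
    intro i j w
    induction w with
    | nil => exact id
    | cons h p ih => intro hi; exact ih (step _ hi _ h)
  have hall : ∀ i, z i = z i₀ := fun i => (hconn.preconnected i₀ i).elim fun w => walk _ _ w rfl
  intro i j; rw [hall i, hall j]
set_option maxHeartbeats 1000000 in
theorem stmt11 {N : ℕ} (G : SimpleGraph (Fin N)) [DecidableRel G.Adj]
    (hconn : G.Connected)
    (a : Fin N → Fin N → ℝ) (haG : ∀ i j, a i j = if G.Adj i j then 1 else 0)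
    (d : Fin N → ℝ) (hd : ∀ i, d i = ∑ j, a i j) (hdpos : ∀ i, 0 < d i)
    (s : ℝ → ℝ) (hs : MonotoneOn s (Set.Icc (-1) 1))
    (hmaps : Set.MapsTo s (Set.Icc (-1) 1) (Set.Icc (-1) 1))
    (K : ℝ) (hK : 0 ≤ K)
    (hlip : ∀ x ∈ Set.Icc (-1 : ℝ) 1, ∀ y ∈ Set.Icc (-1 : ℝ) 1,
      |s x - s y| ≤ K * |x - y|)
    (l : ℝ)
    (hspec : ∀ (μ : ℝ) (v : Fin N → ℝ), v ≠ 0 →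
      (∀ i, (1 / d i) * ∑ j, a i j * v j = μ * v i) → μ = 1 ∨ μ ≤ l)
    (hthr : K * l < 1)
    (x : Fin N → ℝ) (hx : ∀ j, x j ∈ Set.Icc (-1 : ℝ) 1)
    (heq : ∀ i, x i = (1 / d i) * ∑ j, a i j * s (x j)) :
    ∃ c : ℝ, s c = c ∧ ∀ i, x i = c := by
  classical
  haveI : Nonempty (Fin N) := hconn.nonempty
  have ha_nonneg : ∀ i j, 0 ≤ a i j := by
    intro i j; rw [haG]; split <;> norm_num
  have ha_symm : ∀ i j, a i j = a j i := by
    intro i j; rw [haG, haG]; simp [SimpleGraph.adj_comm]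
  have hdne : ∀ i, d i ≠ 0 := fun i => ne_of_gt (hdpos i)
  have heq' : ∀ i, d i * x i = ∑ j, a i j * s (x j) := by
    intro i; rw [heq i, one_div, ← mul_assoc, mul_inv_cancel₀ (hdne i), one_mul]
  obtain ⟨istar, -, hismax⟩ := Finset.exists_max_image Finset.univ x Finset.univ_nonempty
  obtain ⟨jstar, -, hismin⟩ := Finset.exists_min_image Finset.univ x Finset.univ_nonempty
  have hmax : ∀ i, x i ≤ x istar := fun i => hismax i (Finset.mem_univ i)
  have hmin : ∀ i, x jstar ≤ x i := fun i => hismin i (Finset.mem_univ i)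
  by_cases hcon : ∀ i, x i = x istar
  · refine ⟨x istar, ?_, hcon⟩
    have h1 : d istar * x istar = d istar * s (x istar) := by
      rw [heq' istar]
      rw [Finset.sum_congr rfl (fun j _ => by rw [hcon j] : ∀ j ∈ Finset.univ,
        a istar j * s (x j) = a istar j * s (x istar))]
      rw [← Finset.sum_mul, ← hd istar]
    exact (mul_left_cancel₀ (hdne istar) h1).symm
  · exfalso
    have hlt : x jstar < x istar := by
      push_neg at hcon
      obtain ⟨i, hi⟩ := hcon
      rcases lt_or_eq_of_le (hmax i) with h | h
      · exact lt_of_le_of_lt (hmin i) h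
      · exact absurd h hi
    have hmIcc := hx jstar
    have hMIcc := hx istar
    have hsM : x istar ≤ s (x istar) := by
      have h1 : ∑ j, a istar j * s (x j) ≤ ∑ j, a istar j * s (x istar) :=
        Finset.sum_le_sum fun j _ =>
          mul_le_mul_of_nonneg_left (hs (hx j) hMIcc (hmax j)) (ha_nonneg istar j)
      rw [← heq' istar] at h1
      rw [← Finset.sum_mul, ← hd istar] at h1
      exact le_of_mul_le_mul_left h1 (hdpos istar)
    have hsm : s (x jstar) ≤ x jstar := by
      have h1 : ∑ j, a jstar j * s (x jstar) ≤ ∑ j, a jstar j * s (x j) :=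
        Finset.sum_le_sum fun j _ =>
          mul_le_mul_of_nonneg_left (hs hmIcc (hx j) (hmin j)) (ha_nonneg jstar j)
      rw [← heq' jstar] at h1
      rw [← Finset.sum_mul, ← hd jstar] at h1
      exact le_of_mul_le_mul_left h1 (hdpos jstar)
    have hglob : ∑ i, d i * (s (x i) - x i) = 0 := by
      have h1 : ∑ i, d i * x i = ∑ i, d i * s (x i) := by
        calc ∑ i, d i * x i = ∑ i, ∑ j, a i j * s (x j) :=
              Finset.sum_congr rfl fun i _ => heq' i
          _ = ∑ j, ∑ i, a i j * s (x j) := Finset.sum_comm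
          _ = ∑ j, d j * s (x j) := by
              refine Finset.sum_congr rfl fun j _ => ?_
              rw [← Finset.sum_mul]
              congr 1
              rw [hd j]
              exact Finset.sum_congr rfl fun i _ => ha_symm i j
      calc ∑ i, d i * (s (x i) - x i)
          = ∑ i, d i * s (x i) - ∑ i, d i * x i := by
            rw [← Finset.sum_sub_distrib]
            exact Finset.sum_congr rfl fun i _ => by ring
        _ = 0 := by rw [h1]; ring
    have hlipOn : LipschitzOnWith (Real.toNNReal K) s (Set.Icc (-1) 1) := by
      rw [lipschitzOnWith_iff_dist_le_mul]
      intro p hp q hq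
      rw [Real.dist_eq, Real.dist_eq]
      calc |s p - s q| ≤ K * |p - q| := hlip p hp q hq
        _ = Real.toNNReal K * |p - q| := by rw [Real.coe_toNNReal K hK]
    have hcont : ContinuousOn s (Set.Icc (x jstar) (x istar)) :=
      (hlipOn.continuousOn).mono (Set.Icc_subset_Icc hmIcc.1 hMIcc.2)
    have ivt : ∀ t1 t2, x jstar ≤ t1 → t1 ≤ t2 → t2 ≤ x istar → s t1 - t1 ≤ 0 →
        0 ≤ s t2 - t2 → ∃ c, c ∈ Set.Icc t1 t2 ∧ s c = c := by
      intro t1 t2 h1 h2 h3 h4 h5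
      have hc : ContinuousOn (fun t => s t - t) (Set.Icc t1 t2) :=
        (hcont.mono (Set.Icc_subset_Icc h1 h3)).sub continuousOn_id
      obtain ⟨c, hcmem, hc0⟩ := intermediate_value_Icc h2 hc ⟨h4, h5⟩
      exact ⟨c, hcmem, sub_eq_zero.mp hc0⟩
    have ivt' : ∀ t1 t2, x jstar ≤ t1 → t1 ≤ t2 → t2 ≤ x istar → 0 ≤ s t1 - t1 →
        s t2 - t2 ≤ 0 → ∃ c, c ∈ Set.Icc t1 t2 ∧ s c = c := by
      intro t1 t2 h1 h2 h3 h4 h5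
      have hc : ContinuousOn (fun t => s t - t) (Set.Icc t1 t2) :=
        (hcont.mono (Set.Icc_subset_Icc h1 h3)).sub continuousOn_id
      obtain ⟨c, hcmem, hc0⟩ := intermediate_value_Icc' h2 hc ⟨h5, h4⟩
      exact ⟨c, hcmem, sub_eq_zero.mp hc0⟩
    by_cases hfix : ∃ c, c ∈ Set.Ioo (x jstar) (x istar) ∧ s c = c
    · obtain ⟨c, hcIoo, hcfix⟩ := hfix
      have hcIcc : c ∈ Set.Icc (-1:ℝ) 1 :=
        ⟨le_trans hmIcc.1 (le_of_lt hcIoo.1), le_trans (le_of_lt hcIoo.2) hMIcc.2⟩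
      set slope := fun j => if x j = c then 0 else (s (x j) - c) / (x j - c) with hslope_def
      have hslope_nonneg : ∀ j, 0 ≤ slope j := by
        intro j
        simp only [hslope_def]
        split_ifs with h
        · exact le_refl 0
        · rcases lt_or_gt_of_ne h with h2 | h2
          · have hnum : s (x j) - c ≤ 0 := by
              have := hs (hx j) hcIcc (le_of_lt h2)
              rw [← hcfix]; linarith
            exact div_nonneg_iff.mpr (Or.inr ⟨hnum, by linarith⟩)
          · have hnum : 0 ≤ s (x j) - c := by
              have := hs hcIcc (hx j) (le_of_lt h2)
              rw [← hcfix]; linarith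
            exact div_nonneg hnum (by linarith)
      have hslope_leK : ∀ j, slope j ≤ K := by
        intro j
        simp only [hslope_def]
        split_ifs with h
        · exact hK
        · have habs : |s (x j) - c| ≤ K * |x j - c| := by
            have := hlip (x j) (hx j) c hcIcc
            rwa [hcfix] at this
          calc (s (x j) - c)/(x j - c) ≤ |(s (x j) - c)/(x j - c)| := le_abs_self _
            _ = |s (x j) - c| / |x j - c| := abs_div _ _
            _ ≤ K := by
                rw [div_le_iff₀ (abs_pos.mpr (sub_ne_zero.mpr h))]
                exact habs
      have hslope_eq : ∀ j, s (x j) - c = slope j * (x j - c) := by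
        intro j
        simp only [hslope_def]
        split_ifs with h
        · rw [h, hcfix]; ring
        · rw [div_mul_cancel₀ _ (sub_ne_zero.mpr h)]
      have hveq : ∀ i, d i * (x i - c) = ∑ j, a i j * (slope j * (x j - c)) := by
        intro i
        have h1 : ∑ j, a i j * (slope j * (x j - c)) = ∑ j, a i j * (s (x j) - c) :=
          Finset.sum_congr rfl fun j _ => by rw [← hslope_eq j]
        have h2 : ∑ j, a i j * (s (x j) - c)
            = (∑ j, a i j * s (x j)) - (∑ j, a i j) * c := by
          rw [Finset.sum_mul, ← Finset.sum_sub_distrib]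
          exact Finset.sum_congr rfl fun j _ => by ring
        rw [h1, h2, ← heq' i, ← hd i]; ring
      have hsd_pos : ∀ i, 0 < Real.sqrt (d i) := fun i => Real.sqrt_pos.mpr (hdpos i)
      have hsd_ne : ∀ i, Real.sqrt (d i) ≠ 0 := fun i => ne_of_gt (hsd_pos i)
      have hsd_sq : ∀ i, Real.sqrt (d i) * Real.sqrt (d i) = d i :=
        fun i => Real.mul_self_sqrt (le_of_lt (hdpos i))
      have hss_sq : ∀ i, Real.sqrt (slope i) * Real.sqrt (slope i) = slope i :=
        fun i => Real.mul_self_sqrt (hslope_nonneg i)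
      set u := fun j => Real.sqrt (slope j) * Real.sqrt (d j) * (x j - c) with hu_def
      set Smat : Matrix (Fin N) (Fin N) ℝ := fun i j =>
        (Real.sqrt (slope i) * Real.sqrt (slope j)) *
          (a i j / (Real.sqrt (d i) * Real.sqrt (d j))) with hS_def
      set Bmat : Matrix (Fin N) (Fin N) ℝ := fun i j =>
        a i j / (Real.sqrt (d i) * Real.sqrt (d j)) with hB_def
      have hSsym : ∀ i j, Smat i j = Smat j i := by
        intro i j; simp only [hS_def]; rw [ha_symm i j]; ring
      have hBsym : ∀ i j, Bmat i j = Bmat j i := by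
        intro i j; simp only [hB_def]; rw [ha_symm i j, mul_comm (Real.sqrt (d i))]
      have hS_nonneg : ∀ i j, 0 ≤ Smat i j := by
        intro i j
        simp only [hS_def]
        refine mul_nonneg (mul_nonneg (Real.sqrt_nonneg _) (Real.sqrt_nonneg _)) ?_
        exact div_nonneg (ha_nonneg i j)
          (mul_nonneg (Real.sqrt_nonneg _) (Real.sqrt_nonneg _))
      have hSu : ∀ i, ∑ j, Smat i j * u j = u i := by
        intro i
        have hterm : ∀ j, Smat i j * u j
            = (Real.sqrt (slope i) / Real.sqrt (d i)) * (a i j * (slope j * (x j - c))) := by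
          intro j
          simp only [hS_def, hu_def]
          rw [← hss_sq j]
          field_simp [hsd_ne i, hsd_ne j]
          ring_nf; rw [Real.sqrt_sq (Real.sqrt_nonneg _)]
        rw [Finset.sum_congr rfl fun j _ => hterm j, ← Finset.mul_sum, ← hveq i]
        simp only [hu_def]
        rw [← hsd_sq i]
        field_simp [hsd_ne i]
        ring_nf; rw [Real.sqrt_sq (Real.sqrt_nonneg _)]; ring
      have humax : 0 < u istar := by
        have hxne : x istar ≠ c := ne_of_gt hcIoo.2
        have h1 : 0 < slope istar := by
          simp only [hslope_def]
          rw [if_neg hxne]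
          exact div_pos (by linarith [hsM, hcIoo.2]) (by linarith [hcIoo.2])
        simp only [hu_def]
        exact mul_pos (mul_pos (Real.sqrt_pos.mpr h1) (hsd_pos istar)) (by linarith [hcIoo.2])
      have humin : u jstar < 0 := by
        have hxne : x jstar ≠ c := ne_of_lt hcIoo.1
        have h1 : 0 < slope jstar := by
          simp only [hslope_def]
          rw [if_neg hxne]
          rw [div_pos_iff]
          right
          exact ⟨by linarith [hsm, hcIoo.1], by linarith [hcIoo.1]⟩
        simp only [hu_def]
        exact mul_neg_of_pos_of_neg (mul_pos (Real.sqrt_pos.mpr h1) (hsd_pos jstar))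
          (by linarith [hcIoo.1])
      have maxl0_nonneg : (0:ℝ) ≤ max l 0 := le_max_right _ _
      -- key clean-up fact used twice
      have hBe : ∀ (ek : Fin N → ℝ) i j, a i j * (ek j / Real.sqrt (d j))
          = Real.sqrt (d i) * (Bmat i j * ek j) := by
        intro ek i j
        simp only [hB_def]
        field_simp [hsd_ne i, hsd_ne j]
      -- the B quadratic form bound
      have hB : ∀ p : Fin N → ℝ, (∑ i, p i * Real.sqrt (d i)) = 0 →
          ∑ i, p i * (∑ j, Bmat i j * p j) ≤ max l 0 * ∑ i, p i * p i := by
        intro p hp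
        obtain ⟨e, μ, hnorm, heig, hcomp⟩ := exists_eigen Bmat hBsym
        have heigv : ∀ k i, (1 / d i) * ∑ j, a i j * (e k j / Real.sqrt (d j))
            = μ k * (e k i / Real.sqrt (d i)) := by
          intro k i
          rw [Finset.sum_congr rfl fun j _ => hBe (e k) i j, ← Finset.mul_sum, heig k i]
          rw [← hsd_sq i]
          field_simp [hsd_ne i]
          ring_nf; rw [Real.sqrt_sq (Real.sqrt_nonneg _)]
        have hspec' : ∀ k, μ k = 1 ∨ μ k ≤ l := by
          intro k
          have hvne : (fun i => e k i / Real.sqrt (d i)) ≠ 0 := by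
            intro h0
            have hz : ∀ i, e k i = 0 := by
              intro i
              have h1 := congrFun h0 i
              simp only [Pi.zero_apply] at h1
              rcases div_eq_zero_iff.mp h1 with h2 | h2
              · exact h2
              · exact absurd h2 (hsd_ne i)
            have h3 := hnorm k
            rw [Finset.sum_eq_zero (fun i _ => by rw [hz i]; ring)] at h3
            exact one_ne_zero h3.symm
          exact hspec (μ k) _ hvne (heigv k)
        have hcoef : ∀ k, μ k = 1 → (∑ j, e k j * p j) = 0 := by
          intro k hk1
          have hharm : ∀ i, d i * (e k i / Real.sqrt (d i))
              = ∑ j, a i j * (e k j / Real.sqrt (d j)) := by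
            intro i
            have h1 := heigv k i
            rw [hk1, one_mul] at h1
            have h2 : d i * (e k i / Real.sqrt (d i))
                = d i * ((1 / d i) * ∑ j, a i j * (e k j / Real.sqrt (d j))) := by
              rw [h1]
            rw [h2, one_div, ← mul_assoc, mul_inv_cancel₀ (hdne i), one_mul]
          have hconst := maxp G hconn a haG d hd _ hharm
          set i₁ : Fin N := Classical.arbitrary _ with hi₁
          have hekj : ∀ j, e k j = (e k i₁ / Real.sqrt (d i₁)) * Real.sqrt (d j) := by
            intro j
            have h1 := hconst j i₁
            rw [← h1, div_mul_cancel₀ _ (hsd_ne j)]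
          calc ∑ j, e k j * p j
              = (e k i₁ / Real.sqrt (d i₁)) * ∑ j, p j * Real.sqrt (d j) := by
                rw [Finset.mul_sum]
                exact Finset.sum_congr rfl fun j _ => by rw [hekj j]; ring
            _ = 0 := by rw [hp]; ring
        have hterm : ∀ k ∈ Finset.univ, μ k * ((∑ j, e k j * p j) * (∑ j, e k j * p j))
            ≤ max l 0 * ((∑ j, e k j * p j) * (∑ j, e k j * p j)) := by
          intro k _
          rcases hspec' k with h1 | h1
          · rw [hcoef k h1]; simp
          · exact mul_le_mul_of_nonneg_right (le_trans h1 (le_max_left _ _)) (mul_self_nonneg _)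
        calc ∑ i, p i * (∑ j, Bmat i j * p j)
            = ∑ k, μ k * ((∑ j, e k j * p j) * (∑ j, e k j * p j)) :=
              repr_quad Bmat e μ heig hcomp p
          _ ≤ ∑ k, max l 0 * ((∑ j, e k j * p j) * (∑ j, e k j * p j)) :=
              Finset.sum_le_sum hterm
          _ = max l 0 * ∑ k, ((∑ j, e k j * p j) * (∑ j, e k j * p j)) := by
              rw [Finset.mul_sum]
          _ = max l 0 * ∑ i, p i * p i := by rw [← repr_norm e hcomp p]
      have hβ1 : max l 0 * K < 1 := by
        rcases le_or_gt l 0 with h | h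
        · rw [max_eq_right h, zero_mul]; norm_num
        · rw [max_eq_left (le_of_lt h)]; nlinarith [hthr]
      have hShyp : ∀ y : Fin N → ℝ,
          (∑ i, y i * (Real.sqrt (slope i) * Real.sqrt (d i))) = 0 →
          ∑ i, y i * (∑ j, Smat i j * y j) ≤ (max l 0 * K) * ∑ i, y i * y i := by
        intro y hy
        have hp0 : ∑ i, (Real.sqrt (slope i) * y i) * Real.sqrt (d i) = 0 := by
          rw [← hy]
          exact Finset.sum_congr rfl fun i _ => by ring
        have hquad : ∑ i, y i * (∑ j, Smat i j * y j)
            = ∑ i, (Real.sqrt (slope i) * y i) *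
                (∑ j, Bmat i j * (Real.sqrt (slope j) * y j)) := by
          refine Finset.sum_congr rfl fun i _ => ?_
          rw [Finset.mul_sum, Finset.mul_sum]
          refine Finset.sum_congr rfl fun j _ => ?_
          simp only [hS_def, hB_def]
          ring
        have hpn : ∑ i, (Real.sqrt (slope i) * y i) * (Real.sqrt (slope i) * y i)
            ≤ K * ∑ i, y i * y i := by
          rw [Finset.mul_sum]
          refine Finset.sum_le_sum fun i _ => ?_
          have h2 : Real.sqrt (slope i) * y i * (Real.sqrt (slope i) * y i)
              = (Real.sqrt (slope i) * Real.sqrt (slope i)) * (y i * y i) := by ring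
          rw [h2, hss_sq i]
          exact mul_le_mul_of_nonneg_right (hslope_leK i) (mul_self_nonneg _)
        calc ∑ i, y i * (∑ j, Smat i j * y j)
            = ∑ i, (Real.sqrt (slope i) * y i) *
                (∑ j, Bmat i j * (Real.sqrt (slope j) * y j)) := hquad
          _ ≤ max l 0 * ∑ i, (Real.sqrt (slope i) * y i) * (Real.sqrt (slope i) * y i) :=
              hB _ hp0
          _ ≤ max l 0 * (K * ∑ i, y i * y i) := mul_le_mul_of_nonneg_left hpn maxl0_nonneg
          _ = (max l 0 * K) * ∑ i, y i * y i := by ring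
      -- spectral decomposition of S
      obtain ⟨e', μ', hnorm', heig', hcomp'⟩ := exists_eigen Smat hSsym
      obtain ⟨k₀, -, hk₀⟩ := Finset.exists_max_image Finset.univ μ' Finset.univ_nonempty
      have hray : ∀ y : Fin N → ℝ,
          ∑ i, y i * (∑ j, Smat i j * y j) ≤ μ' k₀ * ∑ i, y i * y i := by
        intro y
        rw [repr_quad Smat e' μ' heig' hcomp' y, repr_norm e' hcomp' y, Finset.mul_sum]
        exact Finset.sum_le_sum fun k _ =>
          mul_le_mul_of_nonneg_right (hk₀ k (Finset.mem_univ k)) (mul_self_nonneg _)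
      have hUpos : 0 < ∑ i, u i * u i :=
        Finset.sum_pos' (fun i _ => mul_self_nonneg _)
          ⟨istar, Finset.mem_univ istar, mul_pos humax humax⟩
      have hρ1 : 1 ≤ μ' k₀ := by
        have h1 : ∑ i, u i * (∑ j, Smat i j * u j) = ∑ i, u i * u i :=
          Finset.sum_congr rfl fun i _ => by rw [hSu i]
        have h2 := hray u
        rw [h1] at h2
        nlinarith [hUpos]
      set q := fun i => |e' k₀ i| with hq_def
      have hq_nonneg : ∀ i, 0 ≤ q i := fun i => abs_nonneg _
      have hqq : ∑ i, q i * q i = 1 := by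
        rw [← hnorm' k₀]
        exact Finset.sum_congr rfl fun i _ => abs_mul_abs_self _
      have expand : ∀ z : Fin N → ℝ, ∑ i, z i * (∑ j, Smat i j * z j)
          = ∑ i, ∑ j, Smat i j * (z i * z j) := by
        intro z
        refine Finset.sum_congr rfl fun i _ => ?_
        rw [Finset.mul_sum]
        exact Finset.sum_congr rfl fun j _ => by ring
      have hq1 : μ' k₀ * ∑ i, q i * q i ≤ ∑ i, q i * (∑ j, Smat i j * q j) := by
        have he1 : ∑ i, e' k₀ i * (∑ j, Smat i j * e' k₀ j) = μ' k₀ := by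
          have ha1 : ∑ i, e' k₀ i * (∑ j, Smat i j * e' k₀ j)
              = ∑ i, μ' k₀ * (e' k₀ i * e' k₀ i) :=
            Finset.sum_congr rfl fun i _ => by rw [heig' k₀ i]; ring
          rw [ha1, ← Finset.mul_sum, hnorm' k₀, mul_one]
        have hcmp : ∑ i, e' k₀ i * (∑ j, Smat i j * e' k₀ j)
            ≤ ∑ i, q i * (∑ j, Smat i j * q j) := by
          rw [expand (e' k₀), expand q]
          refine Finset.sum_le_sum fun i _ => Finset.sum_le_sum fun j _ => ?_
          refine mul_le_mul_of_nonneg_left ?_ (hS_nonneg i j)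
          calc e' k₀ i * e' k₀ j ≤ |e' k₀ i * e' k₀ j| := le_abs_self _
            _ = q i * q j := abs_mul _ _
        rw [hqq, mul_one]
        linarith [he1, hcmp]
      have hμc : ∀ k, μ' k * (∑ j, e' k j * q j) = μ' k₀ * (∑ j, e' k j * q j) := by
        have hsum1 := repr_quad Smat e' μ' heig' hcomp' q
        have hsum2 := repr_norm e' hcomp' q
        have hexp : ∑ k, (μ' k₀ - μ' k) * ((∑ j, e' k j * q j) * (∑ j, e' k j * q j))
            = μ' k₀ * (∑ k, (∑ j, e' k j * q j) * (∑ j, e' k j * q j))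
              - ∑ k, μ' k * ((∑ j, e' k j * q j) * (∑ j, e' k j * q j)) := by
          rw [Finset.mul_sum, ← Finset.sum_sub_distrib]
          exact Finset.sum_congr rfl fun k _ => by ring
        have hge : ∀ k ∈ Finset.univ,
            (0:ℝ) ≤ (μ' k₀ - μ' k) * ((∑ j, e' k j * q j) * (∑ j, e' k j * q j)) :=
          fun k _ => mul_nonneg (by linarith [hk₀ k (Finset.mem_univ k)]) (mul_self_nonneg _)
        have hle : ∑ k, (μ' k₀ - μ' k) * ((∑ j, e' k j * q j) * (∑ j, e' k j * q j)) ≤ 0 := by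
          rw [hexp, ← hsum1, ← hsum2]
          linarith [hq1]
        have hsz := le_antisymm hle (Finset.sum_nonneg hge)
        intro k
        have hck := (Finset.sum_eq_zero_iff_of_nonneg hge).mp hsz k (Finset.mem_univ k)
        rcases mul_eq_zero.mp hck with h | h
        · have : μ' k = μ' k₀ := by linarith [sub_eq_zero.mp h]
          rw [this]
        · rw [mul_self_eq_zero.mp h, mul_zero, mul_zero]
      have hqe : ∀ i, ∑ j, Smat i j * q j = μ' k₀ * q i := by
        intro i
        rw [repr_apply Smat e' μ' heig' hcomp' q i]
        have hterm : ∀ k, μ' k * (∑ j, e' k j * q j) * e' k i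
            = μ' k₀ * ((∑ j, e' k j * q j) * e' k i) := by
          intro k
          rw [hμc k]
          ring
        rw [Finset.sum_congr rfl fun k _ => hterm k, ← Finset.mul_sum, hcomp' q i]
      have horth : (μ' k₀ - 1) * (∑ i, u i * q i) = 0 := by
        have h1 : ∑ i, (∑ j, Smat i j * u j) * q i
            = ∑ i, u i * (∑ j, Smat i j * q j) := by
          calc ∑ i, (∑ j, Smat i j * u j) * q i
              = ∑ i, ∑ j, Smat i j * u j * q i := by
                exact Finset.sum_congr rfl fun i _ => by rw [Finset.sum_mul]
            _ = ∑ j, ∑ i, Smat i j * u j * q i := Finset.sum_comm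
            _ = ∑ j, u j * (∑ i, Smat j i * q i) := by
                refine Finset.sum_congr rfl fun j _ => ?_
                rw [Finset.mul_sum]
                exact Finset.sum_congr rfl fun i _ => by rw [hSsym i j]; ring
        have h2 : ∑ i, (∑ j, Smat i j * u j) * q i = ∑ i, u i * q i :=
          Finset.sum_congr rfl fun i _ => by rw [hSu i]
        have h3 : ∑ i, u i * (∑ j, Smat i j * q j) = μ' k₀ * ∑ i, u i * q i := by
          have ha1 : ∑ i, u i * (∑ j, Smat i j * q j)
              = ∑ i, μ' k₀ * (u i * q i) :=
            Finset.sum_congr rfl fun i _ => by rw [hqe i]; ring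
          rw [ha1, ← Finset.mul_sum]
        rw [h2, h3] at h1
        rw [sub_mul, one_mul, ← h1]
        exact sub_self _
      have hclaim : ∀ A B : ℝ,
          (∑ i, (A * u i + B * q i) * (Real.sqrt (slope i) * Real.sqrt (d i))) = 0 →
          ∀ i, A * u i + B * q i = 0 := by
        intro A B hy0
        have hSy : ∀ i, ∑ j, Smat i j * (A * u j + B * q j)
            = A * u i + μ' k₀ * (B * q i) := by
          intro i
          calc ∑ j, Smat i j * (A * u j + B * q j)
              = ∑ j, (A * (Smat i j * u j) + B * (Smat i j * q j)) :=
                Finset.sum_congr rfl fun j _ => by ring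
            _ = A * (∑ j, Smat i j * u j) + B * (∑ j, Smat i j * q j) := by
                rw [Finset.sum_add_distrib, Finset.mul_sum, Finset.mul_sum]
            _ = A * u i + μ' k₀ * (B * q i) := by rw [hSu i, hqe i]; ring
        have hdiff : ∑ i, (A * u i + B * q i) * (∑ j, Smat i j * (A * u j + B * q j))
            - ∑ i, (A * u i + B * q i) * (A * u i + B * q i)
            = (μ' k₀ - 1) * (B * B * ∑ i, q i * q i + A * B * ∑ i, u i * q i) := by
          have hterm : ∀ i, (A * u i + B * q i) * (∑ j, Smat i j * (A * u j + B * q j))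
              - (A * u i + B * q i) * (A * u i + B * q i)
              = (μ' k₀ - 1) * (B * B * (q i * q i) + A * B * (u i * q i)) := by
            intro i
            rw [hSy i]
            ring
          rw [← Finset.sum_sub_distrib, Finset.sum_congr rfl fun i _ => hterm i,
            ← Finset.mul_sum]
          congr 1
          rw [Finset.sum_add_distrib, ← Finset.mul_sum, ← Finset.mul_sum]
        have hnn : 0 ≤ (μ' k₀ - 1) * (B * B * ∑ i, q i * q i + A * B * ∑ i, u i * q i) := by
          rcases eq_or_lt_of_le hρ1 with h | h
          · rw [← h]
            norm_num
          · have huq : ∑ i, u i * q i = 0 := by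
              rcases mul_eq_zero.mp horth with h' | h'
              · exfalso; have : μ' k₀ = 1 := by linarith [sub_eq_zero.mp h']
                linarith
              · exact h'
            rw [huq]
            refine mul_nonneg (by linarith) ?_
            rw [hqq]
            nlinarith [mul_self_nonneg B]
        have hup := hShyp _ hy0
        have hlow : ∑ i, (A * u i + B * q i) * (A * u i + B * q i)
            ≤ ∑ i, (A * u i + B * q i) * (∑ j, Smat i j * (A * u j + B * q j)) := by
          linarith [hdiff, hnn]
        have hyy_nonneg : 0 ≤ ∑ i, (A * u i + B * q i) * (A * u i + B * q i) :=
          Finset.sum_nonneg fun i _ => mul_self_nonneg _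
        have hyy0 : ∑ i, (A * u i + B * q i) * (A * u i + B * q i) = 0 := by
          have hle0 : ∑ i, (A * u i + B * q i) * (A * u i + B * q i) ≤ 0 := by
            nlinarith [hβ1, hup, hlow, hyy_nonneg]
          linarith
        intro i
        exact mul_self_eq_zero.mp
          ((Finset.sum_eq_zero_iff_of_nonneg (fun i _ => mul_self_nonneg _)).mp hyy0 i
            (Finset.mem_univ i))
      obtain ⟨aa, haa_def⟩ : ∃ aa : ℝ, aa = ∑ i, q i * (Real.sqrt (slope i) * Real.sqrt (d i)) :=
        ⟨_, rfl⟩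
      obtain ⟨bb, hbb_def⟩ : ∃ bb : ℝ,
          bb = -(∑ i, u i * (Real.sqrt (slope i) * Real.sqrt (d i))) := ⟨_, rfl⟩
      have hy0 : ∑ i, (aa * u i + bb * q i) * (Real.sqrt (slope i) * Real.sqrt (d i)) = 0 := by
        have h1 : ∑ i, (aa * u i + bb * q i) * (Real.sqrt (slope i) * Real.sqrt (d i))
            = aa * (∑ i, u i * (Real.sqrt (slope i) * Real.sqrt (d i)))
              + bb * (∑ i, q i * (Real.sqrt (slope i) * Real.sqrt (d i))) := by
          rw [Finset.mul_sum, Finset.mul_sum, ← Finset.sum_add_distrib]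
          exact Finset.sum_congr rfl fun i _ => by ring
        rw [h1, haa_def, hbb_def]
        ring
      have hz := hclaim aa bb hy0
      by_cases haa0 : aa = 0
      · have hbb0 : bb = 0 := by
          by_contra hbbne
          have hq0 : ∀ i, q i = 0 := by
            intro i
            have h1 := hz i
            rw [haa0, zero_mul, zero_add] at h1
            rcases mul_eq_zero.mp h1 with h2 | h2
            · exact absurd h2 hbbne
            · exact h2
          rw [Finset.sum_eq_zero (fun i _ => by rw [hq0 i]; ring)] at hqq
          exact one_ne_zero hqq.symm
        have hsum0 : (∑ i, u i * (Real.sqrt (slope i) * Real.sqrt (d i))) = 0 := by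
          have := hbb0
          rw [hbb_def] at this
          linarith [neg_eq_zero.mp this]
        have hy1 : ∑ i, ((1:ℝ) * u i + 0 * q i) * (Real.sqrt (slope i) * Real.sqrt (d i)) = 0 := by
          have ha1 : ∑ i, ((1:ℝ) * u i + 0 * q i) * (Real.sqrt (slope i) * Real.sqrt (d i))
              = ∑ i, u i * (Real.sqrt (slope i) * Real.sqrt (d i)) :=
            Finset.sum_congr rfl fun i _ => by ring
          rw [ha1]
          exact hsum0
        have h2 := hclaim 1 0 hy1 istar
        rw [one_mul, zero_mul, add_zero] at h2
        linarith [humax]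
      · have e1 := hz istar
        have e2 := hz jstar
        have f1 : aa * u istar = -(bb * q istar) := by linarith
        have f2 : aa * u jstar = -(bb * q jstar) := by linarith
        have key : (aa * u istar) * (aa * u jstar) = (bb * q istar) * (bb * q jstar) := by
          rw [f1, f2]; ring
        have haa2 : 0 < aa * aa := mul_self_pos.mpr haa0
        have huu : u istar * u jstar < 0 := mul_neg_of_pos_of_neg humax humin
        have hpos1 : (aa * u istar) * (aa * u jstar) < 0 := by
          have hr : (aa * u istar) * (aa * u jstar) = (aa * aa) * (u istar * u jstar) := by
            ring
          rw [hr]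
          exact mul_neg_of_pos_of_neg haa2 huu
        have hpos2 : 0 ≤ (bb * q istar) * (bb * q jstar) := by
          have hr : (bb * q istar) * (bb * q jstar) = (bb * bb) * (q istar * q jstar) := by
            ring
          rw [hr]
          exact mul_nonneg (mul_self_nonneg bb)
            (mul_nonneg (hq_nonneg istar) (hq_nonneg jstar))
        linarith [key, hpos1, hpos2]
    · -- no interior fixed point
      push_neg at hfix
      have hsign : (∀ t ∈ Set.Ioo (x jstar) (x istar), 0 < s t - t) ∨
          (∀ t ∈ Set.Ioo (x jstar) (x istar), s t - t < 0) := by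
        by_contra hcon2
        push_neg at hcon2
        obtain ⟨⟨t1, ht1, ht1'⟩, ⟨t2, ht2, ht2'⟩⟩ := hcon2
        rcases le_total t1 t2 with h | h
        · obtain ⟨c, hcm, hcfix⟩ := ivt t1 t2 (le_of_lt ht1.1) h (le_of_lt ht2.2) ht1' ht2'
          exact hfix c ⟨lt_of_lt_of_le ht1.1 hcm.1, lt_of_le_of_lt hcm.2 ht2.2⟩ hcfix
        · obtain ⟨c, hcm, hcfix⟩ := ivt' t2 t1 (le_of_lt ht2.1) h (le_of_lt ht1.2) ht2' ht1'
          exact hfix c ⟨lt_of_lt_of_le ht2.1 hcm.1, lt_of_le_of_lt hcm.2 ht1.2⟩ hcfix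
      have hfixall : ∀ i, s (x i) = x i := by
        rcases hsign with hpos | hneg
        · have hfixm : s (x jstar) = x jstar := by
            by_contra hne
            have h4 : s (x jstar) - x jstar ≤ 0 := by linarith [hsm]
            have ht0 : (x jstar + x istar)/2 ∈ Set.Ioo (x jstar) (x istar) :=
              ⟨by linarith [hlt], by linarith [hlt]⟩
            obtain ⟨c, hcm, hcfix⟩ := ivt (x jstar) ((x jstar + x istar)/2) le_rfl
              (le_of_lt ht0.1) (le_of_lt ht0.2) h4 (le_of_lt (hpos _ ht0))
            have hcne : c ≠ x jstar := fun h => hne (h ▸ hcfix)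
            exact hfix c ⟨lt_of_le_of_ne hcm.1 (Ne.symm hcne), lt_of_le_of_lt hcm.2 ht0.2⟩ hcfix
          have hterms : ∀ i ∈ Finset.univ, (0:ℝ) ≤ d i * (s (x i) - x i) := by
            intro i _
            refine mul_nonneg (le_of_lt (hdpos i)) ?_
            rcases eq_or_lt_of_le (hmin i) with h | h
            · rw [← h]; rw [hfixm]; linarith
            · rcases eq_or_lt_of_le (hmax i) with h2 | h2
              · rw [h2]; linarith [hsM]
              · exact le_of_lt (hpos (x i) ⟨h, h2⟩)
          have hzero := (Finset.sum_eq_zero_iff_of_nonneg hterms).mp hglob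
          intro i
          have h2 := hzero i (Finset.mem_univ i)
          rcases mul_eq_zero.mp h2 with h3 | h3
          · exact absurd h3 (hdne i)
          · linarith
        · have hfixM : s (x istar) = x istar := by
            by_contra hne
            have h4 : 0 < s (x istar) - x istar := by
              rcases lt_or_eq_of_le hsM with h | h
              · linarith
              · exact absurd h.symm hne
            have ht0 : (x jstar + x istar)/2 ∈ Set.Ioo (x jstar) (x istar) :=
              ⟨by linarith [hlt], by linarith [hlt]⟩
            obtain ⟨c, hcm, hcfix⟩ := ivt ((x jstar + x istar)/2) (x istar)
              (le_of_lt ht0.1) (le_of_lt ht0.2) le_rfl (le_of_lt (hneg _ ht0)) (by linarith)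
            have hcne : c ≠ x istar := fun h => by rw [h] at hcfix; linarith
            exact hfix c ⟨lt_of_lt_of_le ht0.1 hcm.1, lt_of_le_of_ne hcm.2 hcne⟩ hcfix
          have hterms : ∀ i ∈ Finset.univ, d i * (s (x i) - x i) ≤ (0:ℝ) := by
            intro i _
            refine mul_nonpos_of_nonneg_of_nonpos (le_of_lt (hdpos i)) ?_
            rcases eq_or_lt_of_le (hmax i) with h | h
            · rw [h]; rw [hfixM]; linarith
            · rcases eq_or_lt_of_le (hmin i) with h2 | h2
              · rw [← h2]; linarith [hsm]
              · exact le_of_lt (hneg (x i) ⟨h2, h⟩)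
          have hzero := (Finset.sum_eq_zero_iff_of_nonpos hterms).mp hglob
          intro i
          have h2 := hzero i (Finset.mem_univ i)
          rcases mul_eq_zero.mp h2 with h3 | h3
          · exact absurd h3 (hdne i)
          · linarith
      -- harmonic contradiction
      have hharm : ∀ i, d i * x i = ∑ j, a i j * x j := by
        intro i; rw [heq' i]
        exact Finset.sum_congr rfl fun j _ => by rw [hfixall j]
      have hcst := maxp G hconn a haG d hd x hharm
      exact absurd (fun i => hcst i istar) hcon
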